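/- Suppose θ_1 ≥ θ_2 ≥ ⋯ ≥ θ_N > 0, u_i > 0 for all i, and let f : ℕ → ℝ be non-decreasing and non-negative. For a download-count state d ∈ ℕ^N let the utilities be u_i + f(d_i), let λ*(d) be the optimal CMLAPP value at state d, and let (S*(d),σ*(d)) be an optimal CMLAPP solution at state d. Define recursively V_0(d) = 0 and, for T ≥ 1, V_T(d) = Σ_{j∈S*(d)} P_j(S*(d),σ*(d),d) · (r_j + V_{T−1}(d[j ← d_j + 1])) + P_0(S*(d),σ*(d),d) · V_{T−1}(d), the expected total profit of the policy applying an optimal CMLAPP solution at every step under social influence. Then for every state d and T ≥ 0, V_T(d) ≥ T · λ*(d). In particular, since any policy under which the utilities remain fixed at their initial values earns at most λ*(d) in expectation per step and hence at most T·λ*(d) in total, the policy applying the optimal CMLAPP solution at each step under social influence outperforms in expectation any policy not using social influence. -/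

import Mathlib

/-- Expected profit `U(S,σ)` for utilities `w`. -/
noncomputable def expProfit {N : ℕ} (w r θ : Fin N → ℝ)
    (S : Finset (Fin N)) (σ : Fin N → Fin N) : ℝ :=
  ∑ i ∈ S, r i * (θ (σ i) * w i / (∑ j ∈ S, θ (σ j) * w j + 1))

/-- Choice probability `P_i(S,σ)` for utilities `w`. -/
noncomputable def choiceProb {N : ℕ} (w θ : Fin N → ℝ)
    (S : Finset (Fin N)) (σ : Fin N → Fin N) (i : Fin N) : ℝ :=
  θ (σ i) * w i / (∑ j ∈ S, θ (σ j) * w j + 1)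

/-- No-purchase probability `P_0(S,σ)` for utilities `w`. -/
noncomputable def noPurchase {N : ℕ} (w θ : Fin N → ℝ)
    (S : Finset (Fin N)) (σ : Fin N → Fin N) : ℝ :=
  1 / (∑ j ∈ S, θ (σ j) * w j + 1)


section AuxForStatement15

private lemma ratio_mono (R' D' b t t' rj : ℝ) (hD' : 0 < D') (hb : 0 < b)
    (ht0 : 0 ≤ t) (htt : t ≤ t') (hr : R' ≤ rj * D') :
    (R' + rj * (b * t)) / (D' + b * t) ≤ (R' + rj * (b * t')) / (D' + b * t') := by
  have h1 : 0 < D' + b * t := by nlinarith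
  have h2 : 0 < D' + b * t' := by nlinarith
  rw [div_le_div_iff₀ h1 h2]
  nlinarith [mul_nonneg (mul_nonneg hb.le (sub_nonneg.mpr htt)) (sub_nonneg.mpr hr)]

private lemma removal_gain (R' D' a rj : ℝ) (hD' : 0 < D') (ha : 0 < a)
    (hr : rj * (D' + a) < R' + rj * a) :
    (R' + rj * a) / (D' + a) < R' / D' := by
  have h1 : 0 < D' + a := by linarith
  rw [div_lt_div_iff₀ h1 hD']
  nlinarith [mul_pos ha (show (0:ℝ) < R' - rj * D' by nlinarith)]

private lemma expProfit_eq {N : ℕ} (w r θ : Fin N → ℝ) (S : Finset (Fin N)) (σ : Fin N → Fin N) :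
    expProfit w r θ S σ =
      (∑ i ∈ S, r i * (θ (σ i) * w i)) / (∑ j ∈ S, θ (σ j) * w j + 1) := by
  unfold expProfit
  rw [Finset.sum_div]
  exact Finset.sum_congr rfl fun i _ => (mul_div_assoc _ _ _).symm

private lemma expProfit_split {N : ℕ} (w r θ : Fin N → ℝ) (S : Finset (Fin N))
    (σ : Fin N → Fin N) {j : Fin N} (hj : j ∈ S) :
    expProfit w r θ S σ =
      ((∑ i ∈ S.erase j, r i * (θ (σ i) * w i)) + r j * (θ (σ j) * w j)) /
      ((∑ i ∈ S.erase j, θ (σ i) * w i + 1) + θ (σ j) * w j) := by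
  rw [expProfit_eq,
    ← Finset.sum_erase_add S (fun i => r i * (θ (σ i) * w i)) hj,
    ← Finset.sum_erase_add S (fun i => θ (σ i) * w i) hj]
  congr 1
  ring

end AuxForStatement15

/-- under social influence, the policy applying an optimal CMLAPP
solution at every step earns, over `T` steps from state `d`, an expected total
profit `V_T(d)` of at least `T · λ*(d)`; hence it outperforms in expectation any
policy not using social influence (which earns at most `λ*(d)` per step in
expectation, so at most `T · λ*(d)` in total). -/
theorem optimal_policy_with_social_influence (N c : ℕ) (hc : c ≤ N)
    (u r θ : Fin N → ℝ)
    (hu : ∀ i, 0 < u i) (hθpos : ∀ i, 0 < θ i)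
    (hθ : ∀ i j : Fin N, i ≤ j → θ j ≤ θ i)
    (f : ℕ → ℝ) (hf0 : ∀ n, 0 ≤ f n) (hf : Monotone f)
    (Sstar : (Fin N → ℕ) → Finset (Fin N))
    (σstar : (Fin N → ℕ) → (Fin N → Fin N))
    (lamStar : (Fin N → ℕ) → ℝ)
    (hfeas : ∀ d : Fin N → ℕ, (Sstar d).card ≤ c ∧ Set.InjOn (σstar d) ↑(Sstar d))
    (hval : ∀ d : Fin N → ℕ,
      lamStar d = expProfit (fun i => u i + f (d i)) r θ (Sstar d) (σstar d))
    (hopt : ∀ d : Fin N → ℕ,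
      IsGreatest {z : ℝ | ∃ (S : Finset (Fin N)) (σ : Fin N → Fin N),
        S.card ≤ c ∧ Set.InjOn σ ↑S ∧
        z = expProfit (fun i => u i + f (d i)) r θ S σ} (lamStar d))
    (V : ℕ → (Fin N → ℕ) → ℝ)
    (hV0 : ∀ d : Fin N → ℕ, V 0 d = 0)
    (hVrec : ∀ (T : ℕ) (d : Fin N → ℕ), V (T + 1) d =
      (∑ j ∈ Sstar d, choiceProb (fun i => u i + f (d i)) θ (Sstar d) (σstar d) j *
        (r j + V T (Function.update d j (d j + 1))))
      + noPurchase (fun i => u i + f (d i)) θ (Sstar d) (σstar d) * V T d) :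
    ∀ (T : ℕ) (d : Fin N → ℕ), (T : ℝ) * lamStar d ≤ V T d := by
  have hwpos : ∀ (d : Fin N → ℕ) (i : Fin N), 0 < u i + f (d i) :=
    fun d i => add_pos_of_pos_of_nonneg (hu i) (hf0 _)
  have hD'pos : ∀ (d : Fin N → ℕ) (s : Finset (Fin N)),
      0 < ∑ i ∈ s, θ (σstar d i) * (u i + f (d i)) + 1 := by
    intro d s
    have : 0 ≤ ∑ i ∈ s, θ (σstar d i) * (u i + f (d i)) :=
      Finset.sum_nonneg fun i _ => mul_nonneg (hθpos _).le (hwpos d i).le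
    linarith
  -- Claim 1: every product in the optimal assortment has profit at least lamStar d
  have claim1 : ∀ (d : Fin N → ℕ), ∀ j ∈ Sstar d, lamStar d ≤ r j := by
    intro d j hj
    by_contra hlt
    push_neg at hlt
    set w : Fin N → ℝ := fun i => u i + f (d i) with hw
    set R' : ℝ := ∑ i ∈ (Sstar d).erase j, r i * (θ (σstar d i) * w i) with hR'
    set D' : ℝ := ∑ i ∈ (Sstar d).erase j, θ (σstar d i) * w i + 1 with hD'
    have hD'p : 0 < D' := hD'pos d _
    set a : ℝ := θ (σstar d j) * w j with ha
    have hap : 0 < a := mul_pos (hθpos _) (hwpos d j)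
    have hDap : 0 < D' + a := by linarith
    have hlam : lamStar d = (R' + r j * a) / (D' + a) := by
      rw [hval d, expProfit_split w r θ _ _ hj]
    -- erased assortment is feasible, so its value is at most lamStar d
    have hmem : expProfit w r θ ((Sstar d).erase j) (σstar d) ∈
        {z : ℝ | ∃ (S : Finset (Fin N)) (σ : Fin N → Fin N),
          S.card ≤ c ∧ Set.InjOn σ ↑S ∧ z = expProfit w r θ S σ} := by
      refine ⟨(Sstar d).erase j, σstar d,
        le_trans (Finset.card_le_card (Finset.erase_subset _ _)) (hfeas d).1,
        (hfeas d).2.mono (by exact_mod_cast Finset.erase_subset _ _), rfl⟩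
    have hle : expProfit w r θ ((Sstar d).erase j) (σstar d) ≤ lamStar d := (hopt d).2 hmem
    have herase : expProfit w r θ ((Sstar d).erase j) (σstar d) = R' / D' :=
      expProfit_eq w r θ _ _
    have hmul : r j * (D' + a) < R' + r j * a := by
      rw [hlam] at hlt
      exact (lt_div_iff₀ hDap).mp hlt
    have := removal_gain R' D' a (r j) hD'p hap hmul
    rw [hlam] at hle
    rw [herase] at hle
    linarith
  -- Claim 2: lamStar is nondecreasing along downloads of products in the optimal set
  have claim2 : ∀ (d : Fin N → ℕ), ∀ j ∈ Sstar d,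
      lamStar d ≤ lamStar (Function.update d j (d j + 1)) := by
    intro d j hj
    set d' := Function.update d j (d j + 1) with hd'
    set w : Fin N → ℝ := fun i => u i + f (d i) with hw
    set w' : Fin N → ℝ := fun i => u i + f (d' i) with hw'
    have hz : expProfit w' r θ (Sstar d) (σstar d) ≤ lamStar d' :=
      (hopt d').2 ⟨Sstar d, σstar d, (hfeas d).1, (hfeas d).2, rfl⟩
    refine le_trans ?_ hz
    rw [hval d, expProfit_split w r θ _ _ hj, expProfit_split w' r θ _ _ hj]
    have hRe : ∑ i ∈ (Sstar d).erase j, r i * (θ (σstar d i) * w' i)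
        = ∑ i ∈ (Sstar d).erase j, r i * (θ (σstar d i) * w i) := by
      refine Finset.sum_congr rfl fun i hi => ?_
      have : w' i = w i := by
        simp only [hw', hw, hd', Function.update_of_ne (Finset.ne_of_mem_erase hi)]
      rw [this]
    have hDe : ∑ i ∈ (Sstar d).erase j, θ (σstar d i) * w' i
        = ∑ i ∈ (Sstar d).erase j, θ (σstar d i) * w i := by
      refine Finset.sum_congr rfl fun i hi => ?_
      have : w' i = w i := by
        simp only [hw', hw, hd', Function.update_of_ne (Finset.ne_of_mem_erase hi)]
      rw [this]
    rw [hRe, hDe]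
    set R' : ℝ := ∑ i ∈ (Sstar d).erase j, r i * (θ (σstar d i) * w i) with hR'
    set D' : ℝ := ∑ i ∈ (Sstar d).erase j, θ (σstar d i) * w i + 1 with hD'
    have hD'p : 0 < D' := hD'pos d _
    have hwj : w j ≤ w' j := by
      simp only [hw, hw', hd', Function.update_self]
      have := hf (Nat.le_succ (d j))
      linarith
    have hbp : 0 < θ (σstar d j) := hθpos _
    have hrD : R' ≤ r j * D' := by
      have h1 : lamStar d ≤ r j := claim1 d j hj
      have h2 : lamStar d = (R' + r j * (θ (σstar d j) * w j)) / (D' + θ (σstar d j) * w j) := by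
        rw [hval d, expProfit_split w r θ _ _ hj]
      have hpos : 0 < D' + θ (σstar d j) * w j := by
        have hwjp : 0 < w j := hwpos d j
        nlinarith
      have h3 : (R' + r j * (θ (σstar d j) * w j)) / (D' + θ (σstar d j) * w j) ≤ r j :=
        h2 ▸ h1
      have h4 := (div_le_iff₀ hpos).mp h3
      nlinarith
    exact ratio_mono R' D' (θ (σstar d j)) (w j) (w' j) (r j) hD'p hbp
      (hwpos d j).le hwj hrD
  -- Main induction
  intro T
  induction T with
  | zero => intro d; simp [hV0]
  | succ T ih =>
    intro d
    rw [hVrec T d]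
    set w : Fin N → ℝ := fun i => u i + f (d i) with hw
    have hDpos : 0 < ∑ jj ∈ Sstar d, θ (σstar d jj) * w jj + 1 := hD'pos d _
    have hPnn : ∀ j, 0 ≤ choiceProb w θ (Sstar d) (σstar d) j := by
      intro j
      exact div_nonneg (mul_nonneg (hθpos _).le (hwpos d j).le) hDpos.le
    have hP0 : 0 ≤ noPurchase w θ (Sstar d) (σstar d) :=
      div_nonneg zero_le_one hDpos.le
    have hsum1 : ∑ j ∈ Sstar d, choiceProb w θ (Sstar d) (σstar d) j
        + noPurchase w θ (Sstar d) (σstar d) = 1 := by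
      unfold choiceProb noPurchase
      rw [← Finset.sum_div, ← add_div, div_self hDpos.ne']
    have hexp : ∑ j ∈ Sstar d, choiceProb w θ (Sstar d) (σstar d) j * r j = lamStar d := by
      rw [hval d]
      unfold expProfit choiceProb
      exact Finset.sum_congr rfl fun i _ => by ring
    have hstep : ∀ j ∈ Sstar d, (T:ℝ) * lamStar d ≤ V T (Function.update d j (d j + 1)) := by
      intro j hj
      exact le_trans (mul_le_mul_of_nonneg_left (claim2 d j hj) (Nat.cast_nonneg T))
        (ih (Function.update d j (d j + 1)))
    have hmono : ∑ j ∈ Sstar d, choiceProb w θ (Sstar d) (σstar d) j *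
          (r j + (T:ℝ) * lamStar d)
        + noPurchase w θ (Sstar d) (σstar d) * ((T:ℝ) * lamStar d)
        ≤ (∑ j ∈ Sstar d, choiceProb w θ (Sstar d) (σstar d) j *
          (r j + V T (Function.update d j (d j + 1))))
        + noPurchase w θ (Sstar d) (σstar d) * V T d := by
      refine add_le_add (Finset.sum_le_sum fun j hj => ?_)
        (mul_le_mul_of_nonneg_left (ih d) hP0)
      exact mul_le_mul_of_nonneg_left (by linarith [hstep j hj]) (hPnn j)
    refine le_trans ?_ hmono
    have hsplit : ∑ j ∈ Sstar d, choiceProb w θ (Sstar d) (σstar d) j *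
          (r j + (T:ℝ) * lamStar d)
        = (∑ j ∈ Sstar d, choiceProb w θ (Sstar d) (σstar d) j * r j)
        + (∑ j ∈ Sstar d, choiceProb w θ (Sstar d) (σstar d) j) * ((T:ℝ) * lamStar d) := by
      rw [Finset.sum_mul, ← Finset.sum_add_distrib]
      exact Finset.sum_congr rfl fun i _ => by ring
    rw [hsplit, hexp]
    have : (∑ j ∈ Sstar d, choiceProb w θ (Sstar d) (σstar d) j) * ((T:ℝ) * lamStar d)
        + noPurchase w θ (Sstar d) (σstar d) * ((T:ℝ) * lamStar d)
        = (T:ℝ) * lamStar d := by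
      rw [← add_mul, hsum1, one_mul]
    push_cast
    linarith
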